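/- For every real number $a \in [0,1]$ and every integer $k \geq 2$, letting $q_k = \log_2(2^k+2)$, we have $(a^{q_k/k} + (1-a)^{q_k/k})^k + 2 a^{q_k/2}(1-a)^{q_k/2} \leq 1$. -/

import Mathlib

open Real

/-- Chord inequality for the concave function `y ↦ y ^ r` on `[1, 2]`. -/
lemma hek_chord_rpow {r E y : ℝ} (hr0 : 0 < r) (hr1 : r < 1) (h2r : (2:ℝ) ^ r = 1 + E)
    (hy1 : 1 ≤ y) (hy2 : y ≤ 2) : 1 + E * (y - 1) ≤ y ^ r := by
  have hcc := (Real.strictConcaveOn_rpow hr0 hr1).concaveOn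
  have m1 : (1:ℝ) ∈ Set.Ici (0:ℝ) := by norm_num
  have m2 : (2:ℝ) ∈ Set.Ici (0:ℝ) := by norm_num
  have ha' : (0:ℝ) ≤ 2 - y := by linarith
  have hb' : (0:ℝ) ≤ y - 1 := by linarith
  have hab' : (2 - y) + (y - 1) = 1 := by ring
  have h := hcc.2 m1 m2 ha' hb' hab'
  simp only [smul_eq_mul] at h
  have hy : (2 - y) * 1 + (y - 1) * 2 = y := by ring
  rw [hy] at h
  calc 1 + E * (y - 1) = (2 - y) * (1:ℝ) ^ r + (y - 1) * (2:ℝ) ^ r := by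
        rw [Real.one_rpow, h2r]; ring
    _ ≤ y ^ r := h

/-- The core derivative inequality. -/
lemma hek_core {r s E u : ℝ} (hr0 : 0 < r) (hr1 : r < 1) (hs0 : 0 < s)
    (h2r : (2:ℝ) ^ r = 1 + E) (hrs : r ≤ s * E)
    (hu1 : 1/2 ≤ u) (hu2 : u < 1) :
    r * u ^ (r - 1) * (1 - u) ≤ s * (1 - u ^ r) := by
  have hu0 : 0 < u := by linarith
  have hy1 : 1 ≤ u⁻¹ := (one_le_inv_iff₀).2 ⟨hu0, hu2.le⟩
  have hy2 : u⁻¹ ≤ 2 := by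
    rw [inv_le_comm₀ hu0 (by norm_num)]
    linarith
  have hch := hek_chord_rpow hr0 hr1 h2r hy1 hy2
  have hinv : u⁻¹ ^ r = (u ^ r)⁻¹ := Real.inv_rpow hu0.le r
  have hur : 0 < u ^ r := Real.rpow_pos_of_pos hu0 r
  rw [hinv] at hch
  -- multiply by u ^ r
  have h1 : u ^ r * (1 + E * (u⁻¹ - 1)) ≤ 1 := by
    have := mul_le_mul_of_nonneg_left hch hur.le
    rwa [mul_inv_cancel₀ hur.ne'] at this
  have hE : E * (u ^ r * (u⁻¹ - 1)) ≤ 1 - u ^ r := by nlinarith [h1]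
  have hkey : u ^ r * (u⁻¹ - 1) = u ^ (r - 1) * (1 - u) := by
    rw [Real.rpow_sub hu0, Real.rpow_one]
    field_simp
  have hnn : 0 ≤ u ^ (r - 1) * (1 - u) :=
    mul_nonneg (Real.rpow_pos_of_pos hu0 _).le (by linarith)
  calc r * u ^ (r - 1) * (1 - u) = r * (u ^ (r - 1) * (1 - u)) := by ring
    _ ≤ (s * E) * (u ^ (r - 1) * (1 - u)) := mul_le_mul_of_nonneg_right hrs hnn
    _ = s * (E * (u ^ r * (u⁻¹ - 1))) := by rw [hkey]; ring
    _ ≤ s * (1 - u ^ r) := mul_le_mul_of_nonneg_left hE hs0.le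

/-- The key one-variable inequality `(1 - 2v)^r + 2 v^s ≤ 1`. -/
lemma hek_keyB {r s E v : ℝ} (hr0 : 0 < r) (hr1 : r < 1) (hs0 : 0 < s)
    (h2r : (2:ℝ) ^ r = 1 + E) (hrs : r ≤ s * E)
    (h2s : (2:ℝ) ^ (1 - 2*s) = E / (1 + E))
    (hv0 : 0 ≤ v) (hv4 : v ≤ 1/4) :
    (1 - 2*v) ^ r + 2 * v ^ s ≤ 1 := by
  have hE0 : 0 < E := by
    have h01 : (2:ℝ) ^ (0:ℝ) < (2:ℝ) ^ r := (Real.rpow_lt_rpow_left_iff one_lt_two).2 hr0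
    rw [Real.rpow_zero, h2r] at h01
    linarith
  rcases eq_or_lt_of_le hv0 with hv | hv
  · rw [← hv]
    rw [Real.zero_rpow hs0.ne']
    norm_num
  -- set w = 2v ∈ (0, 1/2]
  set w : ℝ := 2 * v with hwdef
  have hw0 : 0 < w := by positivity
  have hw2 : w ≤ 1/2 := by simp only [hwdef]; linarith
  set G : ℝ → ℝ := fun y => (1 - (1 - y) ^ r) / y ^ s with hGdef
  -- G is antitone on [w, 1/2]
  have hanti : AntitoneOn G (Set.Icc w (1/2)) := by
    have hder : ∀ x ∈ Set.Ioo w (1/2), HasDerivAt G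
        ((r * (1 - x) ^ (r - 1) * x ^ s - (1 - (1 - x) ^ r) * (s * x ^ (s - 1))) / (x ^ s) ^ 2)
        x := by
      intro x hx
      have hx0 : 0 < x := lt_trans hw0 hx.1
      have hx1 : x < 1 := by
        have := hx.2; linarith
      have h1 : HasDerivAt (fun y : ℝ => 1 - y) (-1) x := by
        simpa using (hasDerivAt_id x).const_sub 1
      have h2 : HasDerivAt (fun y : ℝ => (1 - y) ^ r)
          (-1 * r * (1 - x) ^ (r - 1)) x :=
        h1.rpow_const (Or.inl (by linarith))
      have h3 : HasDerivAt (fun y : ℝ => 1 - (1 - y) ^ r)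
          (r * (1 - x) ^ (r - 1)) x := by
        have := h2.const_sub 1
        simpa using this
      have h4 : HasDerivAt (fun y : ℝ => y ^ s) (s * x ^ (s - 1)) x :=
        Real.hasDerivAt_rpow_const (Or.inl hx0.ne')
      have h5 := h3.div h4 (Real.rpow_pos_of_pos hx0 s).ne'
      exact h5
    apply antitoneOn_of_deriv_nonpos (convex_Icc _ _)
    · apply ContinuousOn.div
      · apply Continuous.continuousOn
        exact continuous_const.sub
          ((continuous_const.sub continuous_id).rpow_const (fun y => Or.inr hr0.le))
      · exact (continuous_id.rpow_const (fun y => Or.inr hs0.le)).continuousOn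
      · intro x hx
        exact (Real.rpow_pos_of_pos (lt_of_lt_of_le hw0 hx.1) s).ne'
    · rw [interior_Icc]
      intro x hx
      exact ((hder x hx).differentiableAt).differentiableWithinAt
    · rw [interior_Icc]
      intro x hx
      rw [(hder x hx).deriv]
      have hx0 : 0 < x := lt_trans hw0 hx.1
      have hx1 : x < 1/2 := hx.2
      apply div_nonpos_of_nonpos_of_nonneg
      · -- numerator ≤ 0
        have hcore := hek_core hr0 hr1 hs0 h2r hrs (u := 1 - x)
          (by linarith) (by linarith)
        have hxx : (1:ℝ) - (1 - x) = x := by ring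
        rw [hxx] at hcore
        have hxs : x ^ s = x ^ (s - 1) * x := by
          rw [← Real.rpow_add_one hx0.ne' (s - 1)]
          ring_nf
        have hxs1 : (0:ℝ) ≤ x ^ (s - 1) := (Real.rpow_pos_of_pos hx0 _).le
        have := mul_le_mul_of_nonneg_right hcore hxs1
        rw [hxs]
        nlinarith [this]
      · positivity
  have hmemw : w ∈ Set.Icc w (1/2) := ⟨le_refl w, hw2⟩
  have hmem2 : (1/2 : ℝ) ∈ Set.Icc w (1/2) := ⟨hw2, le_refl _⟩
  have hGw : G (1/2) ≤ G w := hanti hmemw hmem2 hw2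
  -- compute G (1/2) = 2 ^ (1 - s)
  have h1E : (0:ℝ) < 1 + E := by linarith
  have hhalf_r : ((1:ℝ)/2) ^ r = (1 + E)⁻¹ := by
    rw [show ((1:ℝ)/2) = (2:ℝ)⁻¹ by norm_num, Real.inv_rpow (by norm_num), h2r]
  have hhalf_s : ((1:ℝ)/2) ^ s = ((2:ℝ) ^ s)⁻¹ := by
    rw [show ((1:ℝ)/2) = (2:ℝ)⁻¹ by norm_num, Real.inv_rpow (by norm_num)]
  have hG12 : G (1/2) = (2:ℝ) ^ (1 - s) := by
    have h2s' : (2:ℝ) ^ (1 - 2*s) * (2:ℝ) ^ s = (2:ℝ) ^ (1 - s) := by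
      rw [← Real.rpow_add (by norm_num)]
      ring_nf
    simp only [hGdef]
    rw [show (1:ℝ) - 1/2 = 1/2 by norm_num, hhalf_r, hhalf_s,
      show 1 - (1 + E)⁻¹ = E / (1 + E) by field_simp; ring, div_inv_eq_mul, ← h2s, h2s']
  -- conclude
  have h2spos : (0:ℝ) < (2:ℝ) ^ (1 - s) := Real.rpow_pos_of_pos (by norm_num) _
  have hwspos : (0:ℝ) < w ^ s := Real.rpow_pos_of_pos hw0 s
  have hfw : (2:ℝ) ^ (1 - s) * w ^ s ≤ 1 - (1 - w) ^ r := by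
    rw [hG12] at hGw
    have := mul_le_mul_of_nonneg_right hGw hwspos.le
    simp only [hGdef] at this
    rw [div_mul_cancel₀ _ hwspos.ne'] at this
    linarith [this]
  have hvs : 2 * v ^ s = (2:ℝ) ^ (1 - s) * w ^ s := by
    have hv_eq : v = w / 2 := by simp only [hwdef]; ring
    rw [hv_eq, Real.div_rpow hw0.le (by norm_num : (0:ℝ) ≤ 2)]
    rw [Real.rpow_sub (by norm_num : (0:ℝ) < 2), Real.rpow_one]
    field_simp
    try ring
  have hw_eq : 1 - 2*v = 1 - w := by simp only [hwdef]
  rw [hw_eq, hvs]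
  linarith [hfw]

set_option maxHeartbeats 2000000 in
theorem higher_energy_key_ineq (k : ℕ) (hk : 2 ≤ k) (a : ℝ) (ha : a ∈ Set.Icc (0:ℝ) 1) :
    (a ^ (Real.logb 2 (2^k + 2) / k) + (1 - a) ^ (Real.logb 2 (2^k + 2) / k)) ^ k
      + 2 * a ^ (Real.logb 2 (2^k + 2) / 2) * (1 - a) ^ (Real.logb 2 (2^k + 2) / 2) ≤ 1 := by
  obtain ⟨ha0, ha1⟩ := ha
  have hb0 : (0:ℝ) ≤ 1 - a := by linarith
  have hk0 : (0:ℝ) < (k:ℝ) := by exact_mod_cast Nat.lt_of_lt_of_le Nat.zero_lt_two hk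
  have hk2 : (2:ℝ) ≤ (k:ℝ) := by exact_mod_cast hk
  set q : ℝ := Real.logb 2 (2^k + 2) with hqdef
  have h2k4 : (4:ℝ) ≤ 2^k := by
    calc (4:ℝ) = 2^2 := by norm_num
    _ ≤ 2^k := pow_le_pow_right₀ one_le_two hk
  have h2kpos : (0:ℝ) < 2^k := by positivity
  have hX : (0:ℝ) < 2^k + 2 := by linarith
  have h2q : (2:ℝ) ^ q = 2^k + 2 := by
    rw [hqdef]; exact Real.rpow_logb (by norm_num) (by norm_num) hX
  have hlogk : Real.logb 2 ((2:ℝ)^k) = (k:ℝ) := by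
    rw [Real.logb_pow]
    simp [Real.logb_self_eq_one one_lt_two]
  have hqk : (k:ℝ) < q := by
    rw [hqdef, ← hlogk]
    exact Real.logb_lt_logb one_lt_two h2kpos (by linarith)
  have hqk1 : q < (k:ℝ) + 1 := by
    have hlogk1 : Real.logb 2 ((2:ℝ)^(k+1)) = (k:ℝ) + 1 := by
      rw [Real.logb_pow]
      simp [Real.logb_self_eq_one one_lt_two]
    rw [hqdef, ← hlogk1]
    apply Real.logb_lt_logb one_lt_two hX
    rw [pow_succ]
    nlinarith [h2k4]
  have hq2 : (2:ℝ) < q := lt_of_le_of_lt hk2 hqk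
  clear_value q
  set r : ℝ := q - k with hrdef
  set s : ℝ := q / 2 with hsdef
  set E : ℝ := 2 / 2^k with hEdef
  have hE0 : (0:ℝ) < E := by positivity
  clear_value r s E
  have hr0 : 0 < r := by simp only [hrdef]; linarith
  have hr1 : r < 1 := by simp only [hrdef]; linarith
  have hs0 : 0 < s := by simp only [hsdef]; linarith
  have h2r : (2:ℝ) ^ r = 1 + E := by
    rw [hrdef, Real.rpow_sub (by norm_num), h2q, Real.rpow_natCast, hEdef]
    field_simp
  have h2s : (2:ℝ) ^ (1 - 2*s) = E / (1 + E) := by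
    have h2s2 : 2 * s = q := by rw [hsdef]; ring
    rw [h2s2, Real.rpow_sub (by norm_num), Real.rpow_one, h2q, hEdef]
    rw [div_eq_div_iff (by linarith) (by positivity)]
    field_simp
    try ring
  have hrs : r ≤ s * E := by
    rcases eq_or_lt_of_le hk with hk2' | hk3
    · -- k = 2
      have hk2'' : k = 2 := hk2'.symm
      have hq83 : q ≤ 8/3 := by
        have hq6 : q = Real.logb 2 6 := by rw [hqdef]; rw [hk2'']; norm_num
        rw [hq6, Real.logb, div_le_iff₀ (Real.log_pos one_lt_two)]
        have h216 : Real.log 216 ≤ Real.log 256 :=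
          Real.log_le_log (by norm_num) (by norm_num)
        have e1 : Real.log 216 = 3 * Real.log 6 := by
          rw [show (216:ℝ) = 6^3 by norm_num, Real.log_pow]; push_cast; ring
        have e2 : Real.log 256 = 8 * Real.log 2 := by
          rw [show (256:ℝ) = 2^8 by norm_num, Real.log_pow]; push_cast; ring
        linarith
      have hEval : E = 1/2 := by rw [hEdef, hk2'']; norm_num
      rw [hEval, hrdef, hsdef, hk2'']
      push_cast
      linarith
    · -- k ≥ 3
      have hk3' : (3:ℝ) ≤ (k:ℝ) := by exact_mod_cast hk3
      have hr_eq : r = Real.logb 2 (1 + E) := by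
        rw [← h2r, Real.logb_rpow (by norm_num : (0:ℝ) < 2) (by norm_num)]
      have hlog1E : Real.log (1 + E) ≤ E := by
        have := Real.log_le_sub_one_of_pos (show (0:ℝ) < 1 + E by linarith)
        linarith
      have hln2 : (2:ℝ)/3 < Real.log 2 := by
        have := Real.log_two_gt_d9
        linarith
      have hrE : r ≤ (3/2) * E := by
        rw [hr_eq, Real.logb, div_le_iff₀ (Real.log_pos one_lt_two)]
        nlinarith
      have hs32 : (3:ℝ)/2 ≤ s := by
        rw [hsdef]; linarith
      nlinarith
  -- Step A : Hölder
  set p : ℝ := q / k with hpdef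
  clear_value p
  set b : ℝ := 1 - a with hbdef
  clear_value b
  have hab1 : a + b = 1 := by rw [hbdef]; ring
  set T : ℝ := 1 - 2*(a*b) with hTdef
  clear_value T
  have hT : T = a^2 + b^2 := by rw [hTdef, hbdef]; ring
  have hT0 : (0:ℝ) < T := by
    rw [hT]; nlinarith [sq_nonneg (a + b - 1), sq_nonneg (a - b), hab1]
  have hp1 : 1 < p := by
    rw [hpdef, lt_div_iff₀ hk0]; linarith
  have hp2 : p ≤ 3/2 := by
    rw [hpdef, div_le_iff₀ hk0]
    linarith
  have h2p : (0:ℝ) ≤ 2 - p := by linarith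
  have hp1' : (0:ℝ) ≤ p - 1 := by linarith
  have hTpow : (0:ℝ) < T ^ (p-1) := Real.rpow_pos_of_pos hT0 _
  have main2 : ∀ x : ℝ, 0 ≤ x → x ^ p / T ^ (p-1) ≤ (2-p)*x + (p-1)*(x^2/T) := by
    intro x hx
    have hgm := Real.geom_mean_le_arith_mean2_weighted h2p hp1' hx
      (by positivity : (0:ℝ) ≤ x^2/T) (by ring)
    have hpne : (2-p) + 2*(p-1) ≠ 0 := by intro h; linarith
    have e1 : (x^2/T) ^ (p-1) = x ^ (2*(p-1)) / T ^ (p-1) := by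
      rw [Real.div_rpow (by positivity) hT0.le, ← Real.rpow_natCast x 2,
        ← Real.rpow_mul hx]
      norm_num
    have e2 : x ^ (2-p) * x ^ (2*(p-1)) = x ^ p := by
      rw [← Real.rpow_add' hx hpne]
      congr 1
      ring
    have e3 : x ^ p / T ^ (p-1) = x ^ (2-p) * ((x^2/T) ^ (p-1)) := by
      rw [e1, ← e2]
      ring
    rw [e3]
    exact hgm
  have hsum := add_le_add (main2 a ha0) (main2 b hb0)
  have hT2 : a^2/T + b^2/T = 1 := by
    rw [← add_div, hT, div_self (by rw [← hT]; exact hT0.ne')]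
  have hA1 : a ^ p + b ^ p ≤ T ^ (p - 1) := by
    have h1 : a^p/T^(p-1) + b^p/T^(p-1) ≤ 1 := by
      have : (2-p)*a + (p-1)*(a^2/T) + ((2-p)*b + (p-1)*(b^2/T))
          = (2-p)*(a+b) + (p-1)*(a^2/T + b^2/T) := by ring
      rw [this, hab1, hT2] at hsum
      linarith
    rw [← add_div, div_le_one hTpow] at h1
    exact h1
  clear main2 hsum hT2
  have hA2 : (a^p + b^p)^k ≤ T ^ r := by
    have h1 : (a^p + b^p)^k ≤ (T^(p-1))^k :=
      pow_le_pow_left₀ (add_nonneg (Real.rpow_nonneg ha0 p) (Real.rpow_nonneg hb0 p)) hA1 k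
    have h2 : (T^(p-1))^k = T ^ r := by
      rw [← Real.rpow_natCast (T^(p-1)) k, ← Real.rpow_mul hT0.le]
      congr 1
      rw [hpdef, hrdef]
      field_simp
    rw [h2] at h1
    exact h1
  -- Step B
  have hv0 : (0:ℝ) ≤ a * b := mul_nonneg ha0 hb0
  have hv4 : a * b ≤ 1/4 := by nlinarith [sq_nonneg (a - b), hab1]
  have hB := hek_keyB hr0 hr1 hs0 h2r hrs h2s hv0 hv4
  -- combine
  have hmul : a ^ s * b ^ s = (a*b) ^ s := (Real.mul_rpow ha0 hb0).symm
  have hgoal_eq : q / 2 = s := by rw [hsdef]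
  have hgoal_eq2 : q / (k:ℝ) = p := by rw [hpdef]
  calc (a ^ p + b ^ p) ^ k + 2 * a ^ s * b ^ s
      = (a ^ p + b ^ p) ^ k + 2 * (a*b) ^ s := by rw [← hmul]; ring
    _ ≤ T ^ r + 2 * (a*b) ^ s := by linarith [hA2]
    _ = (1 - 2*(a*b)) ^ r + 2 * (a*b) ^ s := by rw [hTdef]
    _ ≤ 1 := hB
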